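/- For 0 < α < π/2 and k := sin α, ∫₀^∞ dt/√(1 + 2t² cos(2α) + t⁴) = K(k), where K(k) = ∫₀^1 dy/√((1 − y²)(1 − k² y²)). -/

import Mathlib

open Real MeasureTheory

theorem bowman_corollary (α : ℝ) (hα0 : 0 < α) (hα1 : α < π/2) :
    ∫ t in Set.Ioi (0:ℝ), 1 / Real.sqrt (1 + 2 * t^2 * Real.cos (2*α) + t^4)
      = ∫ y in (0:ℝ)..1, 1 / Real.sqrt ((1 - y^2) * (1 - (Real.sin α)^2 * y^2)) := by
  set k := Real.sin α with hk
  set c := Real.cos (2*α) with hc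
  have hcos : 0 < Real.cos α := Real.cos_pos_of_mem_Ioo ⟨by linarith [Real.pi_pos], hα1⟩
  have hk0 : 0 < k := Real.sin_pos_of_pos_of_lt_pi hα0 (by linarith [Real.pi_pos])
  have hk2 : k^2 < 1 := by nlinarith [Real.sin_sq_add_cos_sq α]
  have hck : c = 1 - 2*k^2 := by
    rw [hc, Real.cos_two_mul]
    nlinarith [Real.sin_sq_add_cos_sq α]
  set F : ℝ → ℝ := fun t => 1 / Real.sqrt (1 + 2 * t^2 * c + t^4) with hF
  have hP : ∀ t : ℝ, 0 < 1 + 2 * t^2 * c + t^4 := by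
    intro t
    rw [hck]
    nlinarith [sq_nonneg (t^2 - 2*k^2 + 1), mul_pos (mul_pos hk0 hk0) (sub_pos.2 hk2)]
  have hsqrt_pos : ∀ t : ℝ, 0 < Real.sqrt (1 + 2 * t^2 * c + t^4) :=
    fun t => Real.sqrt_pos.2 (hP t)
  have hcontF : Continuous F := by
    apply continuous_const.div
    · exact (Real.continuous_sqrt.comp (by continuity))
    · exact fun t => (hsqrt_pos t).ne'
  have hint01 : IntegrableOn F (Set.Ioo (0:ℝ) 1) :=
    (hcontF.integrableOn_Icc (a := 0) (b := 1)).mono_set Set.Ioo_subset_Icc_self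
  -- substitution t ↦ t⁻¹ : Ioo 0 1 → Ioi 1
  have himg_inv : (fun t : ℝ => t⁻¹) '' Set.Ioo 0 1 = Set.Ioi 1 := by
    ext x
    constructor
    · rintro ⟨t, ⟨ht0, ht1⟩, rfl⟩
      exact Set.mem_Ioi.2 (one_lt_inv₀ ht0 |>.2 ht1)
    · intro hx
      have hx1 : (1:ℝ) < x := hx
      exact ⟨x⁻¹, ⟨inv_pos.2 (by linarith), inv_lt_one_of_one_lt₀ hx1⟩, inv_inv x⟩
  have hderiv_inv : ∀ x ∈ Set.Ioo (0:ℝ) 1,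
      HasDerivWithinAt (fun t : ℝ => t⁻¹) (-(x^2)⁻¹) (Set.Ioo 0 1) x := by
    intro x hx
    have := hasDerivAt_inv (ne_of_gt hx.1)
    simpa [pow_two] using this.hasDerivWithinAt
  have hinj_inv : Set.InjOn (fun t : ℝ => t⁻¹) (Set.Ioo 0 1) :=
    fun a _ b _ h => inv_injective h
  have key_inv : ∀ x ∈ Set.Ioo (0:ℝ) 1, |(-(x^2)⁻¹)| • F x⁻¹ = F x := by
    intro x hx
    have hx0 : (0:ℝ) < x := hx.1
    have hx4 : (0:ℝ) < x^4 := by positivity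
    have e1 : 1 + 2 * (x⁻¹)^2 * c + (x⁻¹)^4 = (1 + 2 * x^2 * c + x^4) / x^4 := by
      field_simp
      ring
    have e2 : Real.sqrt ((1 + 2 * x^2 * c + x^4) / x^4)
        = Real.sqrt (1 + 2 * x^2 * c + x^4) / x^2 := by
      rw [Real.sqrt_div (hP x).le]
      congr 1
      rw [show x^4 = (x^2)^2 by ring, Real.sqrt_sq (by positivity)]
    have habs : |(-(x^2)⁻¹)| = (x^2)⁻¹ := by
      rw [abs_neg, abs_inv, abs_of_pos (by positivity)]
    rw [smul_eq_mul, habs, hF]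
    simp only
    rw [e1, e2]
    have hs := hsqrt_pos x
    field_simp
  have stepA : ∫ x in Set.Ioi (1:ℝ), F x = ∫ x in Set.Ioo (0:ℝ) 1, F x := by
    rw [← himg_inv,
      integral_image_eq_integral_abs_deriv_smul measurableSet_Ioo hderiv_inv hinj_inv]
    exact setIntegral_congr_fun measurableSet_Ioo key_inv
  have hint_inf : IntegrableOn F (Set.Ioi (1:ℝ)) := by
    rw [← himg_inv,
      integrableOn_image_iff_integrableOn_abs_deriv_smul measurableSet_Ioo hderiv_inv hinj_inv]
    exact hint01.congr_fun (fun x hx => (key_inv x hx).symm) measurableSet_Ioo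
  have hsplit : ∫ t in Set.Ioi (0:ℝ), F t
      = (∫ t in Set.Ioo (0:ℝ) 1, F t) + ∫ t in Set.Ioi (1:ℝ), F t := by
    rw [← Set.Ioo_union_Ici_eq_Ioi (zero_lt_one), setIntegral_union ?_ measurableSet_Ici
      hint01 ((integrableOn_Ici_iff_integrableOn_Ioi enorm_ne_top).2 hint_inf),
      integral_Ici_eq_integral_Ioi]
    exact Set.disjoint_left.2 fun x hx hx' => absurd hx.2 (not_lt.2 hx')
  -- substitution y = 2t/(1+t²)
  set φ : ℝ → ℝ := fun t => 2*t/(1+t^2) with hφ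
  set φ' : ℝ → ℝ := fun t => (2 - 2*t^2)/(1+t^2)^2 with hφ'
  set G : ℝ → ℝ := fun y => 1 / Real.sqrt ((1 - y^2) * (1 - k^2 * y^2)) with hG
  have hden : ∀ t : ℝ, (0:ℝ) < 1 + t^2 := fun t => by positivity
  have hmaps : ∀ t ∈ Set.Ioo (0:ℝ) 1, φ t ∈ Set.Ioo (0:ℝ) 1 := by
    intro t ht
    constructor
    · exact div_pos (by linarith [ht.1]) (hden t)
    · rw [div_lt_one (hden t)]
      nlinarith [mul_pos (sub_pos.2 ht.2) (sub_pos.2 ht.2)]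
  have himg_φ : φ '' Set.Ioo 0 1 = Set.Ioo 0 1 := by
    apply Set.Subset.antisymm
    · rintro y ⟨t, ht, rfl⟩; exact hmaps t ht
    · have hcφ : ContinuousOn φ (Set.Icc 0 1) := by
        apply ContinuousOn.div (by fun_prop) (by fun_prop)
        exact fun t _ => (hden t).ne'
      have h01 := intermediate_value_Ioo (zero_le_one) hcφ
      have h0 : φ 0 = 0 := by rw [hφ]; norm_num
      have h1 : φ 1 = 1 := by rw [hφ]; norm_num
      rw [h0, h1] at h01
      exact h01
  have hderiv_φ : ∀ t ∈ Set.Ioo (0:ℝ) 1,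
      HasDerivWithinAt φ (φ' t) (Set.Ioo 0 1) t := by
    intro t _
    have h1 : HasDerivAt (fun t : ℝ => 2*t) 2 t := by
      simpa using (hasDerivAt_id t).const_mul (2:ℝ)
    have h2 : HasDerivAt (fun t : ℝ => 1 + t^2) (2*t) t := by
      simpa using ((hasDerivAt_pow 2 t).const_add (1:ℝ))
    have := h1.div h2 (hden t).ne'
    have heq : (2 * (1 + t^2) - 2*t*(2*t)) / (1+t^2)^2 = φ' t := by
      rw [hφ']; ring_nf
    rw [← heq]
    exact this.hasDerivWithinAt
  have hinj_φ : Set.InjOn φ (Set.Ioo (0:ℝ) 1) := by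
    intro a ha b hb h
    rw [hφ] at h
    simp only at h
    rw [div_eq_div_iff (hden a).ne' (hden b).ne'] at h
    have h2 : (a - b) * (1 - a*b) = 0 := by linear_combination h/2
    rcases mul_eq_zero.1 h2 with h3 | h3
    · linarith
    · nlinarith [ha.1, ha.2, hb.1, hb.2]
  have key_φ : ∀ t ∈ Set.Ioo (0:ℝ) 1, |φ' t| • G (φ t) = 2 * F t := by
    intro t ht
    have ht0 := ht.1
    have ht1 := ht.2
    have h1t : (0:ℝ) < 1 - t^2 := by nlinarith
    have hφ'pos : 0 < φ' t := by
      rw [hφ']; exact div_pos (by linarith) (by positivity)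
    have hq0 : 0 ≤ (1 - t^2) * Real.sqrt (1 + 2 * t^2 * c + t^4) / (1+t^2)^2 := by
      positivity
    have hprod : (1 - (φ t)^2) * (1 - k^2 * (φ t)^2)
        = ((1 - t^2) * Real.sqrt (1 + 2 * t^2 * c + t^4) / (1+t^2)^2)^2 := by
      have hsq : Real.sqrt (1 + 2 * t^2 * c + t^4) ^ 2 = 1 + 2 * t^2 * c + t^4 :=
        Real.sq_sqrt (hP t).le
      rw [hφ]
      simp only
      conv_rhs => rw [div_pow, mul_pow, hsq]
      rw [hck]
      field_simp
      ring
    rw [smul_eq_mul, abs_of_pos hφ'pos, hG]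
    simp only
    rw [hprod, Real.sqrt_sq hq0, hF, hφ']
    simp only
    have hs : Real.sqrt (1 + 2 * t^2 * c + t^4) ≠ 0 := (hsqrt_pos t).ne'
    have h2 : (1:ℝ) + t^2 ≠ 0 := (hden t).ne'
    have h3 : (1:ℝ) - t^2 ≠ 0 := h1t.ne'
    field_simp
  -- assemble
  have hRHS : (∫ y in (0:ℝ)..1, G y) = ∫ t in Set.Ioo (0:ℝ) 1, 2 * F t := by
    rw [intervalIntegral.integral_of_le zero_le_one, integral_Ioc_eq_integral_Ioo]
    calc ∫ y in Set.Ioo (0:ℝ) 1, G y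
        = ∫ y in φ '' Set.Ioo (0:ℝ) 1, G y := by rw [himg_φ]
      _ = ∫ x in Set.Ioo (0:ℝ) 1, |φ' x| • G (φ x) :=
          integral_image_eq_integral_abs_deriv_smul measurableSet_Ioo hderiv_φ hinj_φ G
      _ = ∫ t in Set.Ioo (0:ℝ) 1, 2 * F t := setIntegral_congr_fun measurableSet_Ioo key_φ
  calc ∫ t in Set.Ioi (0:ℝ), F t
      = (∫ t in Set.Ioo (0:ℝ) 1, F t) + ∫ t in Set.Ioi (1:ℝ), F t := hsplit
    _ = ∫ t in Set.Ioo (0:ℝ) 1, 2 * F t := by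
        rw [stepA, ← MeasureTheory.integral_add hint01 hint01]
        exact setIntegral_congr_fun measurableSet_Ioo fun t _ => (two_mul (F t)).symm
    _ = ∫ y in (0:ℝ)..1, G y := hRHS.symm
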